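/- Fix an integer r ≥ 3, a constant C > 0, and ε > 0. Then there exists d₀ such that for all d ≥ d₀ the following holds: if S₁,…,S_r ∈ {0,1}^d are such that every coordinate column (S₁(j),…,S_r(j)) lies in {0,1}^r ∖ {𝟘, 𝟙}, and for every t ∈ {0,1}^r ∖ {𝟘, 𝟙} the number of coordinates j ∈ [d] with (S₁(j),…,S_r(j)) = t differs from d/(2^r − 2) by at most C·√d, then there exists a closed affine halfspace U ⊆ ℝ^d whose bounding hyperplane contains all of S₁,…,S_r and such that |U ∩ {0,1}^d| ≤ 2^{(H_r + ε)·d}. -/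

import Mathlib

open scoped BigOperators

/-- The binary entropy function `h(ξ) = ξ log₂(1/ξ) + (1-ξ) log₂(1/(1-ξ))`. -/
noncomputable def binEnt (x : ℝ) : ℝ :=
  x * Real.logb 2 x⁻¹ + (1 - x) * Real.logb 2 (1 - x)⁻¹

/-- `H_r = (1/(2^r-2)) ∑_{i=1}^{r-1} C(r,i) h(i/r)`. -/
noncomputable def Hent (r : ℕ) : ℝ :=
  (1 / ((2 : ℝ) ^ r - 2)) * ∑ i ∈ Finset.Icc 1 (r - 1), (r.choose i : ℝ) * binEnt ((i : ℝ) / r)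

/-- The 0/1-point of `ℝ^d` associated to a Boolean vector. -/
def bv {d : ℕ} (x : Fin d → Bool) : Fin d → ℝ := fun i => if x i then 1 else 0

namespace Stmt18Aux
open Finset Real

def wt {r : ℕ} (t : Fin r → Bool) : ℕ := (Finset.univ.filter (fun i => t i = true)).card

noncomputable def w0 (r : ℕ) (t : Fin r → Bool) : ℝ :=
  Real.log (((r : ℝ) - wt t) / (wt t : ℝ))

lemma wt_le {r : ℕ} (t : Fin r → Bool) : wt t ≤ r := by
  exact le_trans (Finset.card_filter_le _ _) (by simp)

lemma wt_pos {r : ℕ} {t : Fin r → Bool} (h : t ≠ fun _ => false) : 1 ≤ wt t := by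
  apply Finset.card_pos.2
  by_contra hne
  rw [Finset.not_nonempty_iff_eq_empty, Finset.filter_eq_empty_iff] at hne
  exact h (funext fun i => by simpa using hne (Finset.mem_univ i))

lemma wt_lt {r : ℕ} {t : Fin r → Bool} (h : t ≠ fun _ => true) : wt t ≤ r - 1 := by
  have hlt : wt t < r := by
    rcases lt_or_eq_of_le (wt_le t) with h' | h'
    · exact h'
    · exfalso
      have : (Finset.univ.filter (fun i => t i = true)) = Finset.univ := by
        apply Finset.eq_univ_of_card
        simpa [Fintype.card_fin, wt] using h'
      exact h (funext fun i => by
        have := (Finset.mem_filter.1 (this ▸ Finset.mem_univ i)).2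
        simpa using this)
  omega

lemma card_wt_eq (r i : ℕ) :
    ((Finset.univ.filter (fun t : Fin r → Bool => wt t = i)).card : ℕ) = r.choose i := by
  have : (Finset.powersetCard i (Finset.univ : Finset (Fin r))).card = r.choose i := by
    rw [Finset.card_powersetCard, Finset.card_univ, Fintype.card_fin]
  rw [← this]
  apply Finset.card_bij' (fun t (_ : t ∈ Finset.univ.filter (fun t : Fin r → Bool => wt t = i)) => Finset.univ.filter (fun i' => t i' = true))
    (fun s (_ : s ∈ Finset.powersetCard i Finset.univ) => fun i' => decide (i' ∈ s))
  case hi =>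
    intro t ht
    rw [Finset.mem_powersetCard_univ]
    exact (Finset.mem_filter.1 ht).2
  case hj =>
    intro s hs
    rw [Finset.mem_powersetCard_univ] at hs
    refine Finset.mem_filter.2 ⟨Finset.mem_univ _, ?_⟩
    simp only [Finset.mem_filter, Finset.mem_univ, true_and, wt]
    rw [← hs]
    congr 1
    ext i'
    simp
  case left_inv =>
    intro t ht
    funext i'
    simp
  case right_inv =>
    intro s hs
    ext i'
    simp

lemma log_one_add_exp_le (x y : ℝ) :
    Real.log (1 + Real.exp (-y)) ≤ Real.log (1 + Real.exp (-x)) + |y - x| := by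
  have h1 : (0:ℝ) < 1 + Real.exp (-y) := by positivity
  have h2 : (0:ℝ) < 1 + Real.exp (-x) := by positivity
  have key : 1 + Real.exp (-y) ≤ Real.exp (|y - x|) * (1 + Real.exp (-x)) := by
    have e1 : (1:ℝ) ≤ Real.exp (|y - x|) := Real.one_le_exp (abs_nonneg _)
    have e2 : Real.exp (-y) ≤ Real.exp (|y - x|) * Real.exp (-x) := by
      rw [← Real.exp_add]
      apply Real.exp_le_exp.2
      have : x - y ≤ |y - x| := by
        rw [abs_sub_comm]; exact le_abs_self _
      linarith
    nlinarith [Real.exp_pos (-x)]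
  calc Real.log (1 + Real.exp (-y)) ≤ Real.log (Real.exp (|y - x|) * (1 + Real.exp (-x))) :=
        Real.log_le_log h1 key
    _ = |y - x| + Real.log (1 + Real.exp (-x)) := by
        rw [Real.log_mul (Real.exp_ne_zero _) (ne_of_gt h2), Real.log_exp]
    _ = Real.log (1 + Real.exp (-x)) + |y - x| := by ring

lemma binEnt_nonneg {x : ℝ} (h0 : 0 < x) (h1 : x < 1) : 0 ≤ binEnt x := by
  have hx1 : (1:ℝ) ≤ x⁻¹ := (one_le_inv₀ h0).2 h1.le
  have hx2 : (1:ℝ) ≤ (1 - x)⁻¹ := (one_le_inv₀ (by linarith)).2 (by linarith)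
  have l1 : (0:ℝ) ≤ Real.logb 2 x⁻¹ := Real.logb_nonneg (by norm_num) hx1
  have l2 : (0:ℝ) ≤ Real.logb 2 (1 - x)⁻¹ := Real.logb_nonneg (by norm_num) hx2
  have : (0:ℝ) ≤ x := h0.le
  unfold binEnt
  nlinarith

lemma binEnt_le {x R : ℝ} (h0 : 0 < x) (h1 : x < 1) (hR1 : 1 ≤ R)
    (hxa : x⁻¹ ≤ R) (hxb : (1 - x)⁻¹ ≤ R) : binEnt x ≤ Real.logb 2 R := by
  have hx1 : (0:ℝ) < x⁻¹ := by positivity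
  have hx2 : (0:ℝ) < (1 - x)⁻¹ := by
    have : (0:ℝ) < 1 - x := by linarith
    positivity
  have hlog2 : (0:ℝ) < Real.log 2 := Real.log_pos (by norm_num)
  have l1 : Real.logb 2 x⁻¹ ≤ Real.logb 2 R := by
    unfold Real.logb; gcongr
  have l2 : Real.logb 2 (1 - x)⁻¹ ≤ Real.logb 2 R := by
    unfold Real.logb; gcongr
  have nn1 : (0:ℝ) ≤ Real.logb 2 x⁻¹ := Real.logb_nonneg (by norm_num) ((one_le_inv₀ h0).2 h1.le)
  unfold binEnt
  nlinarith

lemma bracket_eq {r k : ℕ} (hr : 1 ≤ r) (h1 : 1 ≤ k) (h2 : k < r) :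
    ((k : ℝ) / r) * Real.log (((r : ℝ) - k) / k)
      + Real.log (1 + Real.exp (-(Real.log (((r : ℝ) - k) / k))))
    = Real.log 2 * binEnt ((k : ℝ) / r) := by
  have hk0 : (0:ℝ) < k := by exact_mod_cast h1
  have hrk : (0:ℝ) < (r : ℝ) - k := by
    have : (k:ℝ) < r := by exact_mod_cast h2
    linarith
  have hr0 : (0:ℝ) < r := by positivity
  have hq : (0:ℝ) < ((r:ℝ) - k) / k := by positivity
  rw [Real.exp_neg, Real.exp_log hq]
  have e1 : 1 + (((r:ℝ) - k) / k)⁻¹ = (r:ℝ) / ((r:ℝ) - k) * ((r:ℝ) - k + k - k + k) / r := by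
    field_simp
    ring
  have e1' : 1 + (((r:ℝ) - k) / k)⁻¹ = (r:ℝ) / ((r:ℝ) - k) := by
    rw [e1]; field_simp; ring
  rw [e1']
  have hb : binEnt ((k:ℝ)/r) = ((k:ℝ)/r) * Real.logb 2 ((r:ℝ)/k)
      + (((r:ℝ) - k)/r) * Real.logb 2 ((r:ℝ)/((r:ℝ)-k)) := by
    unfold binEnt
    have i1 : ((k:ℝ)/r)⁻¹ = (r:ℝ)/k := by field_simp
    have i2 : (1 - (k:ℝ)/r) = ((r:ℝ)-k)/r := by field_simp
    have i3 : (((r:ℝ)-k)/r)⁻¹ = (r:ℝ)/((r:ℝ)-k) := by field_simp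
    rw [i1, i2, i3]
  rw [hb]
  have hl2 : Real.log 2 ≠ 0 := by
    have := Real.log_pos (by norm_num : (1:ℝ) < 2); linarith
  rw [Real.logb, Real.logb]
  rw [Real.log_div (ne_of_gt hrk) (ne_of_gt hk0), Real.log_div (ne_of_gt hr0) (ne_of_gt hk0),
    Real.log_div (ne_of_gt hr0) (ne_of_gt hrk)]
  field_simp
  ring

open Classical in
lemma count_le (d : ℕ) (a : Fin d → ℝ) (c : ℝ) :
    (((Finset.univ.filter (fun x : Fin d → Bool => (∑ j, a j * bv x j) ≤ c)).card : ℝ))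
      ≤ Real.exp c * ∏ j, (1 + Real.exp (-a j)) := by
  have step1 : (((Finset.univ.filter (fun x : Fin d → Bool => (∑ j, a j * bv x j) ≤ c)).card : ℝ))
      ≤ ∑ x : Fin d → Bool, Real.exp (c - ∑ j, a j * bv x j) := by
    rw [Finset.card_eq_sum_ones]
    push_cast
    refine le_trans ?_ (Finset.sum_le_sum_of_subset_of_nonneg
      (Finset.filter_subset (fun x : Fin d → Bool => (∑ j, a j * bv x j) ≤ c) Finset.univ)
      (fun x _ _ => (Real.exp_pos _).le))
    apply Finset.sum_le_sum
    intro x hx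
    have hx' : (∑ j, a j * bv x j) ≤ c := (Finset.mem_filter.1 hx).2
    exact Real.one_le_exp (by linarith)
  refine le_trans step1 (le_of_eq ?_)
  have e0 : ∀ x : Fin d → Bool, Real.exp (c - ∑ j, a j * bv x j)
      = Real.exp c * ∏ j, Real.exp (-(a j * bv x j)) := by
    intro x
    rw [← Real.exp_sum, ← Real.exp_add]
    congr 1
    rw [Finset.sum_neg_distrib]
    ring
  simp only [e0, ← Finset.mul_sum]
  congr 1
  have e1 : ∀ (j : Fin d), (1 + Real.exp (-a j)) = ∑ b : Bool, Real.exp (-(a j * (if b then (1:ℝ) else 0))) := by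
    intro j
    rw [Fintype.sum_bool]
    simp [add_comm]
  calc ∑ x : Fin d → Bool, ∏ j, Real.exp (-(a j * bv x j))
      = ∑ x ∈ Fintype.piFinset (fun _ : Fin d => (Finset.univ : Finset Bool)),
          ∏ j, Real.exp (-(a j * (if x j then (1:ℝ) else 0))) := by
        rw [Fintype.piFinset_univ]; rfl
    _ = ∏ j, ∑ b : Bool, Real.exp (-(a j * (if b then (1:ℝ) else 0))) := by
        rw [Finset.prod_univ_sum]
    _ = ∏ j, (1 + Real.exp (-a j)) := by
        exact Finset.prod_congr rfl (fun j _ => (e1 j).symm)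

def TTF (r : ℕ) : Finset (Fin r → Bool) :=
  Finset.univ.filter (fun t => ¬(t = fun _ => false) ∧ ¬(t = fun _ => true))

lemma mem_TTF {r : ℕ} {t : Fin r → Bool} :
    t ∈ TTF r ↔ t ≠ (fun _ => false) ∧ t ≠ (fun _ => true) := by
  simp [TTF]

lemma wt_mem_TTF {r : ℕ} {t : Fin r → Bool} (h : t ∈ TTF r) : 1 ≤ wt t ∧ wt t ≤ r - 1 := by
  rw [mem_TTF] at h
  exact ⟨wt_pos h.1, wt_lt h.2⟩

lemma wt_comp {r : ℕ} (σ : Equiv.Perm (Fin r)) (t : Fin r → Bool) : wt (t ∘ σ) = wt t := by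
  unfold wt
  refine Finset.card_bij' (fun x _ => σ x) (fun x _ => σ.symm x) ?_ ?_ ?_ ?_
  · intro x hx
    simp only [Finset.mem_filter, Finset.mem_univ, true_and, Function.comp] at hx ⊢
    exact hx
  · intro x hx
    simp only [Finset.mem_filter, Finset.mem_univ, true_and, Function.comp] at hx ⊢
    simpa using hx
  · intro x _; simp
  · intro x _; simp

lemma comp_mem_TTF {r : ℕ} (σ : Equiv.Perm (Fin r)) {t : Fin r → Bool} (h : t ∈ TTF r) :
    (t ∘ σ) ∈ TTF r := by
  rw [mem_TTF] at h ⊢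
  constructor
  · intro hc
    apply h.1
    funext i
    have := congrFun hc (σ.symm i)
    simpa using this
  · intro hc
    apply h.2
    funext i
    have := congrFun hc (σ.symm i)
    simpa using this

lemma sum_TT_swap {r : ℕ} (g : ℕ → ℝ) (i i' : Fin r) :
    ∑ t ∈ TTF r, g (wt t) * (if t i then 1 else 0)
      = ∑ t ∈ TTF r, g (wt t) * (if t i' then 1 else 0) := by
  refine Finset.sum_nbij' (fun t => t ∘ (Equiv.swap i i')) (fun t => t ∘ (Equiv.swap i i'))
    ?_ ?_ ?_ ?_ ?_
  · intro t ht; exact comp_mem_TTF _ ht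
  · intro t ht; exact comp_mem_TTF _ ht
  · intro t _; funext x; simp [Function.comp]
  · intro t _; funext x; simp [Function.comp]
  · intro t _
    rw [wt_comp]
    congr 2
    simp [Function.comp, Equiv.swap_apply_right]

lemma wt_false {r : ℕ} : wt (fun _ : Fin r => false) = 0 := by simp [wt]

lemma wt_true {r : ℕ} : wt (fun _ : Fin r => true) = r := by
  simp [wt, Finset.card_univ]

lemma sum_TTF_eq {r : ℕ} (hr : 1 ≤ r) (f : ℕ → ℝ) :
    ∑ t ∈ TTF r, f (wt t) = ∑ i ∈ Finset.Icc 1 (r - 1), (r.choose i : ℝ) * f i := by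
  rw [← Finset.sum_fiberwise_of_maps_to (g := wt) (t := Finset.Icc 1 (r - 1))
    (fun t ht => by simpa [Finset.mem_Icc] using wt_mem_TTF ht)]
  apply Finset.sum_congr rfl
  intro i hi
  rw [Finset.mem_Icc] at hi
  have hfil : (TTF r).filter (fun t => wt t = i) = Finset.univ.filter (fun t : Fin r → Bool => wt t = i) := by
    ext t
    simp only [Finset.mem_filter, Finset.mem_univ, true_and, mem_TTF, Finset.filter_filter]
    constructor
    · rintro ⟨-, h⟩; exact h
    · intro h
      refine ⟨⟨?_, ?_⟩, h⟩
      · intro hc; subst hc; rw [wt_false] at h; omega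
      · intro hc; subst hc; rw [wt_true] at h; omega
  rw [hfil]
  have : ∀ t ∈ Finset.univ.filter (fun t : Fin r → Bool => wt t = i), f (wt t) = f i := by
    intro t ht
    rw [(Finset.mem_filter.1 ht).2]
  rw [Finset.sum_congr rfl this, Finset.sum_const, card_wt_eq, nsmul_eq_mul]

lemma abs_w0_le {r k : ℕ} (h1 : 1 ≤ k) (h2 : k < r) :
    |Real.log (((r : ℝ) - k) / k)| ≤ Real.log r := by
  have hk0 : (0:ℝ) < k := by exact_mod_cast h1
  have hr1 : (1:ℝ) ≤ r := by
    have : 1 ≤ r := le_trans h1 h2.le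
    exact_mod_cast this
  have hrk : (0:ℝ) < (r:ℝ) - k := by
    have : (k:ℝ) < r := by exact_mod_cast h2
    linarith
  have hx : (0:ℝ) < ((r:ℝ) - k) / k := by positivity
  rw [abs_le]
  constructor
  · have hinv : (((r:ℝ) - k) / k)⁻¹ ≤ (r:ℝ) := by
      rw [inv_div]
      have h1rk : (1:ℝ) ≤ (r:ℝ) - k := by
        have hn : (1:ℕ) ≤ r - k := by omega
        have h' : ((r - k : ℕ) : ℝ) = (r:ℝ) - k := by
          push_cast [Nat.cast_sub h2.le]; ring
        rw [← h']; exact_mod_cast hn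
      calc (k:ℝ) / ((r:ℝ) - k) ≤ (k:ℝ) / 1 :=
            div_le_div_of_nonneg_left hk0.le (by norm_num) h1rk
        _ = k := by ring
        _ ≤ r := by exact_mod_cast h2.le
    have h3 := Real.log_le_log (by positivity) hinv
    rw [Real.log_inv] at h3
    linarith
  · apply Real.log_le_log hx
    calc ((r:ℝ) - k) / k ≤ ((r:ℝ) - k) / 1 :=
          div_le_div_of_nonneg_left hrk.le (by norm_num) (by exact_mod_cast h1)
      _ = (r:ℝ) - k := by ring
      _ ≤ r := by linarith [hk0]

end Stmt18Aux

set_option maxHeartbeats 1000000 in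
/-- Shallow cuts: if `S₁,…,S_r ∈ {0,1}^d` are spanning (every coordinate column is
nonconstant) and every nonconstant `t ∈ {0,1}^r` occurs as a column with multiplicity
within `C√d` of `d/(2^r-2)`, then for large `d` there is a closed affine halfspace
`{x | ∑ⱼ aⱼ xⱼ ≤ c}` whose bounding hyperplane contains all `Sᵢ` and which contains at
most `2^{(H_r+ε)d}` cube vertices. -/
theorem stmt18 (r : ℕ) (hr : 3 ≤ r) (C : ℝ) (hC : 0 < C) (ε : ℝ) (hε : 0 < ε) :
    ∃ d₀ : ℕ, ∀ d : ℕ, d₀ ≤ d → ∀ S : Fin r → Fin d → Bool,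
      (∀ j : Fin d,
        (fun i => S i j) ≠ (fun _ => false) ∧ (fun i => S i j) ≠ (fun _ => true)) →
      (∀ t : Fin r → Bool, t ≠ (fun _ => false) → t ≠ (fun _ => true) →
        |({j : Fin d | (fun i => S i j) = t}.ncard : ℝ) -
            (d : ℝ) / ((2 : ℝ) ^ r - 2)| ≤ C * Real.sqrt d) →
      ∃ (a : Fin d → ℝ) (c : ℝ),
        (∀ i : Fin r, ∑ j, a j * bv (S i) j = c) ∧
        ({x : Fin d → Bool | (∑ j, a j * bv x j) ≤ c}.ncard : ℝ) ≤
          (2 : ℝ) ^ ((Hent r + ε) * (d : ℝ)) := by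
  classical
  open Stmt18Aux Finset in
  set R : ℝ := (2:ℝ)^r - 2 with hRdef
  have hR0 : (0:ℝ) < R := by
    have h8 : (8:ℝ) ≤ 2^r := by
      calc (8:ℝ) = 2^3 := by norm_num
        _ ≤ 2^r := by exact pow_le_pow_right₀ (by norm_num) hr
    simp only [hRdef]; linarith
  have hln2 : (0:ℝ) < Real.log 2 := Real.log_pos (by norm_num)
  have hr1 : (1:ℝ) ≤ r := by exact_mod_cast le_trans (by norm_num) hr
  have hr0 : (0:ℝ) < r := by linarith
  set M : ℝ := Real.logb 2 r with hMdef
  have hM0 : 0 ≤ M := Real.logb_nonneg (by norm_num) hr1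
  set lr : ℝ := Real.log r with hlrdef
  have hlr0 : 0 ≤ lr := Real.log_nonneg hr1
  set K : ℝ := Real.log 2 * (C * 2^r * M) + r * (2 * C * 2^r * lr) with hKdef
  have hK0 : 0 ≤ K := by positivity
  set Q : ℝ := max ((K+1)/(Real.log 2 * ε)) ((C+1)*R) with hQdef
  have hQ0 : 0 < Q := lt_of_lt_of_le (by positivity) (le_max_right _ _)
  refine ⟨⌈Q^2⌉₊ + 1, ?_⟩
  intro d hd S hcol hcnt
  have hd1 : (1:ℝ) ≤ d := by
    have : 1 ≤ d := le_trans (Nat.le_add_left 1 _) hd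
    exact_mod_cast this
  have hsq : Q ≤ Real.sqrt d := by
    have h1 : Q^2 ≤ (d:ℝ) := by
      calc Q^2 ≤ (⌈Q^2⌉₊ : ℝ) := Nat.le_ceil _
        _ ≤ (⌈Q^2⌉₊ + 1 : ℕ) := by push_cast; linarith
        _ ≤ (d:ℝ) := by exact_mod_cast hd
    calc Q = Real.sqrt (Q^2) := by rw [Real.sqrt_sq hQ0.le]
      _ ≤ Real.sqrt d := Real.sqrt_le_sqrt h1
  have hsd0 : (0:ℝ) < Real.sqrt d := by positivity
  have hsdd : Real.sqrt d * Real.sqrt d = (d:ℝ) := Real.mul_self_sqrt (by positivity)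
  have hCd : C * Real.sqrt d < (d:ℝ) / R := by
    have h1 : (C+1) * R ≤ Real.sqrt d := le_trans (le_max_right _ _) hsq
    rw [lt_div_iff₀ hR0]
    nlinarith
  have hKd : K * Real.sqrt d ≤ Real.log 2 * ε * d := by
    have h1 : (K+1)/(Real.log 2 * ε) ≤ Real.sqrt d := le_trans (le_max_left _ _) hsq
    have h2 : K + 1 ≤ Real.log 2 * ε * Real.sqrt d := by
      rw [div_le_iff₀ (by positivity)] at h1
      linarith
    nlinarith
  -- the column map and counts
  set col : Fin d → (Fin r → Bool) := fun j i => S i j with hcoldef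
  set n : (Fin r → Bool) → ℕ := fun t => (Finset.univ.filter (fun j => col j = t)).card with hndef
  have hncard : ∀ t : Fin r → Bool, ({j : Fin d | (fun i => S i j) = t}.ncard : ℕ) = n t := by
    intro t
    rw [Set.ncard_eq_toFinset_card', Set.toFinset_setOf]
  have hcnt' : ∀ t ∈ TTF r, |(n t : ℝ) - (d:ℝ) / R| ≤ C * Real.sqrt d := by
    intro t ht
    rw [mem_TTF] at ht
    have := hcnt t ht.1 ht.2
    rwa [hncard t] at this
  have hnz : ∀ t : Fin r → Bool, t ∉ TTF r → n t = 0 := by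
    intro t ht
    rw [mem_TTF] at ht
    push_neg at ht
    simp only [hndef, Finset.card_eq_zero, Finset.filter_eq_empty_iff]
    intro j _
    intro hc
    rcases (hcol j) with ⟨h1, h2⟩
    by_cases hcf : t = (fun _ => false)
    · exact h1 (by rw [← hc] at hcf; exact hcf)
    · have hct := ht hcf
      exact h2 (by rw [← hc] at hct; exact hct)
  have hnpos : ∀ t ∈ TTF r, 0 < (n t : ℝ) := by
    intro t ht
    have h := hcnt' t ht
    rw [abs_le] at h
    nlinarith [h.1]
  -- grouping lemmas
  have hgroup : ∀ f : (Fin r → Bool) → ℝ, ∑ j, f (col j) = ∑ t : Fin r → Bool, (n t : ℝ) * f t := by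
    intro f
    rw [← Finset.sum_fiberwise Finset.univ col (fun j => f (col j))]
    refine Finset.sum_congr rfl (fun t _ => ?_)
    rw [Finset.sum_congr rfl (fun j hj => by rw [(Finset.mem_filter.1 hj).2] :
      ∀ j ∈ Finset.univ.filter (fun j => col j = t), f (col j) = f t)]
    rw [Finset.sum_const, nsmul_eq_mul]
  have hgroupP : ∀ f : (Fin r → Bool) → ℝ, ∏ j, f (col j) = ∏ t : Fin r → Bool, (f t) ^ (n t) := by
    intro f
    rw [← Finset.prod_fiberwise Finset.univ col (fun j => f (col j))]
    refine Finset.prod_congr rfl (fun t _ => ?_)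
    rw [Finset.prod_congr rfl (fun j hj => by rw [(Finset.mem_filter.1 hj).2] :
      ∀ j ∈ Finset.univ.filter (fun j => col j = t), f (col j) = f t)]
    rw [Finset.prod_const]
  have hTTsum : ∀ f : (Fin r → Bool) → ℝ,
      ∑ t ∈ TTF r, (n t : ℝ) * f t = ∑ t : Fin r → Bool, (n t : ℝ) * f t := by
    intro f
    refine Finset.sum_subset (Finset.subset_univ _) (fun t _ ht => ?_)
    rw [hnz t ht]
    simp
  -- the weight construction
  set sgl : Fin r → (Fin r → Bool) := fun i i' => decide (i' = i) with hsgldef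
  have hsglmem : ∀ i, sgl i ∈ TTF r := by
    intro i
    rw [mem_TTF]
    constructor
    · intro hc
      have h := congrFun hc i
      simp [hsgldef] at h
    · intro hc
      obtain ⟨i', hi'⟩ := Fintype.exists_ne_of_one_lt_card
        (by rw [Fintype.card_fin]; omega) i
      have h := congrFun hc i'
      simp [hsgldef, hi'] at h
  set A : Fin r → ℝ := fun i => ∑ t ∈ TTF r, (n t : ℝ) * w0 r t * (if t i then 1 else 0)
    with hAdef
  set c : ℝ := (∑ i, A i) / r with hcdef
  set δ : Fin r → ℝ := fun i => (c - A i) / (n (sgl i)) with hδdef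
  set W : (Fin r → Bool) → ℝ := fun t => w0 r t + ∑ i, (if t = sgl i then δ i else 0)
    with hWdef
  set aa : Fin d → ℝ := fun j => W (col j) with haadef
  have hnδ : ∀ i, (n (sgl i) : ℝ) * δ i = c - A i := by
    intro i
    have hpos := hnpos (sgl i) (hsglmem i)
    show (n (sgl i) : ℝ) * ((c - A i) / (n (sgl i))) = c - A i
    rw [mul_comm]
    exact div_mul_cancel₀ _ (ne_of_gt hpos)
  refine ⟨aa, c, ?_, ?_⟩
  · -- hyperplane condition
    intro i
    have e1 : ∀ j, aa j * bv (S i) j = (fun t => W t * (if t i then 1 else 0)) (col j) :=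
      fun j => rfl
    rw [Finset.sum_congr rfl (fun j _ => e1 j), hgroup (fun t => W t * (if t i then 1 else 0))]
    have expand : ∀ t : Fin r → Bool, (n t : ℝ) * (W t * (if t i then 1 else 0))
        = (n t : ℝ) * (w0 r t * (if t i then 1 else 0))
          + ∑ i' : Fin r, (if t = sgl i' then (n t : ℝ) * δ i' * (if t i then 1 else 0) else 0) := by
      intro t
      simp only [hWdef]
      have h2 : (n t : ℝ) * ((∑ i', if t = sgl i' then δ i' else 0) * (if t i then 1 else 0))
          = ∑ i', (if t = sgl i' then (n t : ℝ) * δ i' * (if t i then 1 else 0) else 0) := by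
        rw [Finset.sum_mul, Finset.mul_sum]
        refine Finset.sum_congr rfl (fun i' _ => ?_)
        split <;> ring
      rw [add_mul, mul_add, h2]
    rw [Finset.sum_congr rfl (fun t _ => expand t), Finset.sum_add_distrib]
    have hfirst : ∑ t : Fin r → Bool, (n t : ℝ) * (w0 r t * (if t i then 1 else 0)) = A i := by
      rw [← hTTsum (fun t => w0 r t * (if t i then 1 else 0)), hAdef]
      exact Finset.sum_congr rfl (fun t _ => by ring)
    have hsecond : ∑ t : Fin r → Bool,
        ∑ i' : Fin r, (if t = sgl i' then (n t : ℝ) * δ i' * (if t i then 1 else 0) else 0)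
        = c - A i := by
      rw [Finset.sum_comm]
      have hinner : ∀ i' : Fin r,
          ∑ t : Fin r → Bool, (if t = sgl i' then (n t : ℝ) * δ i' * (if t i then 1 else 0) else 0)
          = if i = i' then c - A i' else 0 := by
        intro i'
        rw [Finset.sum_ite_eq' Finset.univ (sgl i')
          (fun t => (n t : ℝ) * δ i' * (if t i then 1 else 0))]
        simp only [Finset.mem_univ, if_true]
        by_cases h : i = i'
        · subst h
          have h1 : sgl i i = true := by simp [hsgldef]
          rw [if_pos rfl, h1]
          simp only [if_true, mul_one]
          exact hnδ i
        · rw [if_neg h]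
          have : sgl i' i = false := by
            simp [hsgldef, h]
          rw [this]
          simp
      rw [Finset.sum_congr rfl (fun i' _ => hinner i'), Finset.sum_ite_eq Finset.univ i
        (fun i' => c - A i')]
      simp
    rw [hfirst, hsecond]
    ring
  · -- counting bound
    have hset : ({x : Fin d → Bool | (∑ j, aa j * bv x j) ≤ c}.ncard : ℕ)
        = (Finset.univ.filter (fun x : Fin d → Bool => (∑ j, aa j * bv x j) ≤ c)).card := by
      rw [Set.ncard_eq_toFinset_card', Set.toFinset_setOf]
    have hprod : ∏ j, (1 + Real.exp (-aa j))
        = Real.exp (∑ t : Fin r → Bool, (n t : ℝ) * Real.log (1 + Real.exp (-W t))) := by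
      have h1 : ∀ j, (1 + Real.exp (-aa j)) = (fun t => 1 + Real.exp (-W t)) (col j) :=
        fun j => rfl
      rw [Finset.prod_congr rfl (fun j _ => h1 j), hgroupP (fun t => 1 + Real.exp (-W t)),
        Real.exp_sum]
      refine Finset.prod_congr rfl (fun t _ => ?_)
      rw [Real.exp_nat_mul, Real.exp_log (by positivity)]
    -- the analytic estimate
    have hstep1 : ∑ t : Fin r → Bool, (n t : ℝ) * Real.log (1 + Real.exp (-W t))
        ≤ (∑ t : Fin r → Bool, (n t : ℝ) * Real.log (1 + Real.exp (-(w0 r t))))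
          + ∑ i, |c - A i| := by
      have h1 : ∀ t : Fin r → Bool, (n t : ℝ) * Real.log (1 + Real.exp (-W t))
          ≤ (n t : ℝ) * Real.log (1 + Real.exp (-(w0 r t)))
            + ∑ i, (if t = sgl i then (n t : ℝ) * |δ i| else 0) := by
        intro t
        have lip := log_one_add_exp_le (w0 r t) (W t)
        have habs : |W t - w0 r t| ≤ ∑ i, (if t = sgl i then |δ i| else 0) := by
          have he : W t - w0 r t = ∑ i, (if t = sgl i then δ i else 0) := by
            simp only [hWdef]; ring
          rw [he]
          refine le_trans (Finset.abs_sum_le_sum_abs _ _)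
            (Finset.sum_le_sum (fun i _ => ?_))
          split <;> simp
        have hn0 : (0:ℝ) ≤ (n t : ℝ) := Nat.cast_nonneg _
        have step : (n t : ℝ) * Real.log (1 + Real.exp (-W t))
            ≤ (n t : ℝ) * (Real.log (1 + Real.exp (-(w0 r t)))
              + ∑ i, (if t = sgl i then |δ i| else 0)) := by
          refine mul_le_mul_of_nonneg_left ?_ hn0
          exact le_trans lip (by linarith)
        refine le_trans step (le_of_eq ?_)
        rw [mul_add, Finset.mul_sum]
        congr 1
        refine Finset.sum_congr rfl (fun i _ => ?_)
        split <;> ring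
      refine le_trans (Finset.sum_le_sum (fun t _ => h1 t)) ?_
      rw [Finset.sum_add_distrib]
      have h2 : ∑ t : Fin r → Bool, ∑ i, (if t = sgl i then (n t : ℝ) * |δ i| else 0)
          = ∑ i, |c - A i| := by
        rw [Finset.sum_comm]
        refine Finset.sum_congr rfl (fun i _ => ?_)
        rw [Finset.sum_ite_eq' Finset.univ (sgl i) (fun t => (n t : ℝ) * |δ i|)]
        simp only [Finset.mem_univ, if_true]
        rw [← hnδ i, abs_mul,
          abs_of_nonneg (show (0:ℝ) ≤ (n (sgl i):ℝ) from Nat.cast_nonneg _)]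
      rw [h2]
    have hcsum : c = ∑ t ∈ TTF r, (n t : ℝ) * (((wt t : ℝ)/r) * w0 r t) := by
      rw [hcdef]
      have h1 : ∑ i, A i = ∑ t ∈ TTF r, (n t : ℝ) * w0 r t * (wt t : ℝ) := by
        simp only [hAdef]
        rw [Finset.sum_comm]
        refine Finset.sum_congr rfl (fun t _ => ?_)
        rw [← Finset.mul_sum, Finset.sum_boole]
        congr 1
      rw [h1, Finset.sum_div]
      refine Finset.sum_congr rfl (fun t _ => ?_)
      field_simp
    have hmain : c + ∑ t : Fin r → Bool, (n t : ℝ) * Real.log (1 + Real.exp (-(w0 r t)))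
        = ∑ t ∈ TTF r, (n t : ℝ) * (((wt t:ℝ)/r) * w0 r t
            + Real.log (1 + Real.exp (-(w0 r t)))) := by
      rw [hcsum, ← hTTsum (fun t => Real.log (1 + Real.exp (-(w0 r t)))),
        ← Finset.sum_add_distrib]
      refine Finset.sum_congr rfl (fun t _ => ?_)
      ring
    have hbr : ∀ t ∈ TTF r, ((wt t:ℝ)/r) * w0 r t + Real.log (1 + Real.exp (-(w0 r t)))
        = Real.log 2 * binEnt ((wt t:ℝ)/r) := by
      intro t ht
      obtain ⟨h1, h2⟩ := wt_mem_TTF ht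
      exact bracket_eq (by omega) h1 (by omega)
    have hBb : ∀ t ∈ TTF r, 0 ≤ binEnt ((wt t:ℝ)/r) ∧ binEnt ((wt t:ℝ)/r) ≤ M := by
      intro t ht
      obtain ⟨h1, h2⟩ := wt_mem_TTF ht
      have hk1 : (1:ℝ) ≤ (wt t:ℝ) := by exact_mod_cast h1
      have hkr : (wt t:ℝ) ≤ (r:ℝ) - 1 := by
        have h3 : ((wt t : ℕ):ℝ) ≤ ((r - 1 : ℕ):ℝ) := by exact_mod_cast h2
        have hc' : ((r-1:ℕ):ℝ) = (r:ℝ) - 1 := by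
          push_cast [Nat.cast_sub (by omega : 1 ≤ r)]; ring
        linarith [hc' ▸ h3]
      have hx0 : 0 < (wt t:ℝ)/r := by positivity
      have hx1 : (wt t:ℝ)/r < 1 := by rw [div_lt_one hr0]; linarith
      refine ⟨binEnt_nonneg hx0 hx1, ?_⟩
      refine binEnt_le hx0 hx1 hr1 ?_ ?_
      · rw [show ((wt t:ℝ)/r)⁻¹ = (r:ℝ)/(wt t:ℝ) from by rw [inv_div]]
        rw [div_le_iff₀ (by linarith)]
        nlinarith
      · rw [show (1 - (wt t:ℝ)/r)⁻¹ = (r:ℝ)/((r:ℝ) - wt t) from by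
          rw [show 1 - (wt t:ℝ)/r = ((r:ℝ) - wt t)/r from by field_simp, inv_div]]
        rw [div_le_iff₀ (by linarith)]
        nlinarith
    have hcardTTF : ((TTF r).card : ℝ) ≤ 2^r := by
      have h1 : (TTF r).card ≤ Fintype.card (Fin r → Bool) := Finset.card_le_univ _
      have h2 : Fintype.card (Fin r → Bool) = 2^r := by
        rw [Fintype.card_fun, Fintype.card_bool, Fintype.card_fin]
      calc ((TTF r).card:ℝ) ≤ (Fintype.card (Fin r → Bool):ℝ) := by exact_mod_cast h1
        _ = 2^r := by rw [h2]; push_cast; ring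
    have hsumB : ∑ t ∈ TTF r, binEnt ((wt t:ℝ)/r)
        = ∑ i ∈ Finset.Icc 1 (r-1), (r.choose i:ℝ) * binEnt ((i:ℝ)/r) :=
      sum_TTF_eq (by omega) (fun k => binEnt ((k:ℝ)/r))
    have hsumBle : ∑ t ∈ TTF r, binEnt ((wt t:ℝ)/r) ≤ 2^r * M := by
      calc ∑ t ∈ TTF r, binEnt ((wt t:ℝ)/r) ≤ ∑ _t ∈ TTF r, M :=
            Finset.sum_le_sum (fun t ht => (hBb t ht).2)
        _ = ((TTF r).card : ℝ) * M := by rw [Finset.sum_const, nsmul_eq_mul]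
        _ ≤ 2^r * M := mul_le_mul_of_nonneg_right hcardTTF hM0
    have hHR : Hent r = (1/R) * ∑ i ∈ Finset.Icc 1 (r-1), (r.choose i:ℝ) * binEnt ((i:ℝ)/r) := by
      rw [hRdef]; rfl
    have hub : ∀ t ∈ TTF r, (n t:ℝ) ≤ (d:ℝ)/R + C * Real.sqrt d := by
      intro t ht
      have h := hcnt' t ht
      rw [abs_le] at h
      linarith [h.2]
    have hstep4 : ∑ t ∈ TTF r, (n t:ℝ) * (Real.log 2 * binEnt ((wt t:ℝ)/r))
        ≤ Real.log 2 * ((d:ℝ) * Hent r + C * Real.sqrt d * (2^r * M)) := by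
      have h1 : ∀ t ∈ TTF r, (n t:ℝ) * (Real.log 2 * binEnt ((wt t:ℝ)/r))
          ≤ Real.log 2 * (((d:ℝ)/R + C * Real.sqrt d) * binEnt ((wt t:ℝ)/r)) := by
        intro t ht
        have hb := (hBb t ht).1
        have h2 := hub t ht
        calc (n t:ℝ) * (Real.log 2 * binEnt ((wt t:ℝ)/r))
            ≤ ((d:ℝ)/R + C * Real.sqrt d) * (Real.log 2 * binEnt ((wt t:ℝ)/r)) :=
              mul_le_mul_of_nonneg_right h2 (mul_nonneg hln2.le hb)
          _ = Real.log 2 * (((d:ℝ)/R + C * Real.sqrt d) * binEnt ((wt t:ℝ)/r)) := by ring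
      refine le_trans (Finset.sum_le_sum h1) ?_
      rw [← Finset.mul_sum]
      refine mul_le_mul_of_nonneg_left ?_ hln2.le
      have h3 : ∑ t ∈ TTF r, ((d:ℝ)/R + C * Real.sqrt d) * binEnt ((wt t:ℝ)/r)
          = ((d:ℝ)/R) * (∑ t ∈ TTF r, binEnt ((wt t:ℝ)/r))
            + (C * Real.sqrt d) * (∑ t ∈ TTF r, binEnt ((wt t:ℝ)/r)) := by
        simp only [← Finset.mul_sum]
        ring
      rw [h3]
      have h4 : ((d:ℝ)/R) * (∑ t ∈ TTF r, binEnt ((wt t:ℝ)/r)) = (d:ℝ) * Hent r := by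
        rw [hsumB, hHR]
        ring
      rw [h4]
      have h5 : (C * Real.sqrt d) * (∑ t ∈ TTF r, binEnt ((wt t:ℝ)/r))
          ≤ C * Real.sqrt d * (2^r * M) :=
        mul_le_mul_of_nonneg_left hsumBle (by positivity)
      linarith
    have hAbar : ∀ i i' : Fin r, |A i - A i'| ≤ 2 * (C * Real.sqrt d * (2^r * lr)) := by
      intro i i'
      have hdev : ∀ i'' : Fin r,
          |A i'' - ∑ t ∈ TTF r, ((d:ℝ)/R) * w0 r t * (if t i'' then 1 else 0)|
          ≤ C * Real.sqrt d * (2^r * lr) := by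
        intro i''
        simp only [hAdef]
        rw [← Finset.sum_sub_distrib]
        refine le_trans (Finset.abs_sum_le_sum_abs _ _) ?_
        have hterm : ∀ t ∈ TTF r,
            |(n t:ℝ) * w0 r t * (if t i'' then 1 else 0)
              - ((d:ℝ)/R) * w0 r t * (if t i'' then 1 else 0)|
            ≤ C * Real.sqrt d * lr := by
          intro t ht
          have e : (n t:ℝ) * w0 r t * (if t i'' then 1 else 0)
              - ((d:ℝ)/R) * w0 r t * (if t i'' then 1 else 0)
              = ((n t:ℝ) - (d:ℝ)/R) * w0 r t * (if t i'' then 1 else 0) := by ring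
          rw [e, abs_mul, abs_mul]
          obtain ⟨h1, h2⟩ := wt_mem_TTF ht
          have hw : |w0 r t| ≤ lr := abs_w0_le h1 (by omega)
          have hI : |if t i'' then (1:ℝ) else 0| ≤ 1 := by split <;> simp
          have h3 := hcnt' t ht
          have h4 : |(n t:ℝ) - (d:ℝ)/R| * |w0 r t| ≤ (C * Real.sqrt d) * lr :=
            mul_le_mul h3 hw (abs_nonneg _) (by positivity)
          nlinarith [abs_nonneg ((n t:ℝ) - (d:ℝ)/R), abs_nonneg (w0 r t),
            abs_nonneg (if t i'' then (1:ℝ) else 0),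
            mul_nonneg (abs_nonneg ((n t:ℝ) - (d:ℝ)/R)) (abs_nonneg (w0 r t))]
        refine le_trans (Finset.sum_le_sum hterm) ?_
        rw [Finset.sum_const, nsmul_eq_mul]
        calc ((TTF r).card : ℝ) * (C * Real.sqrt d * lr)
            ≤ 2^r * (C * Real.sqrt d * lr) :=
              mul_le_mul_of_nonneg_right hcardTTF (by positivity)
          _ = C * Real.sqrt d * (2^r * lr) := by ring
      have hsym : ∑ t ∈ TTF r, ((d:ℝ)/R) * w0 r t * (if t i then 1 else 0)
          = ∑ t ∈ TTF r, ((d:ℝ)/R) * w0 r t * (if t i' then 1 else 0) := by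
        exact sum_TT_swap (r := r) (fun k => ((d:ℝ)/R) * Real.log (((r:ℝ) - k)/k)) i i'
      have h5 := hdev i
      have h6 := hdev i'
      rw [hsym] at h5
      calc |A i - A i'| ≤ |A i - ∑ t ∈ TTF r, ((d:ℝ)/R) * w0 r t * (if t i' then 1 else 0)|
            + |A i' - ∑ t ∈ TTF r, ((d:ℝ)/R) * w0 r t * (if t i' then 1 else 0)| := by
              rw [show A i - A i' = (A i - ∑ t ∈ TTF r, ((d:ℝ)/R) * w0 r t * (if t i' then 1 else 0))
                - (A i' - ∑ t ∈ TTF r, ((d:ℝ)/R) * w0 r t * (if t i' then 1 else 0)) from by ring]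
              exact abs_sub _ _
        _ ≤ 2 * (C * Real.sqrt d * (2^r * lr)) := by linarith
    have hP : ∑ i, |c - A i| ≤ (r:ℝ) * (2 * (C * Real.sqrt d * (2^r * lr))) := by
      have hci : ∀ i, |c - A i| ≤ 2 * (C * Real.sqrt d * (2^r * lr)) := by
        intro i
        have he : c - A i = (∑ i', (A i' - A i)) / r := by
          rw [hcdef, Finset.sum_sub_distrib, Finset.sum_const, Finset.card_univ,
            Fintype.card_fin, nsmul_eq_mul, sub_div]
          field_simp
        rw [he, abs_div, abs_of_pos hr0, div_le_iff₀ hr0]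
        calc |∑ i', (A i' - A i)| ≤ ∑ i', |A i' - A i| := Finset.abs_sum_le_sum_abs _ _
          _ ≤ ∑ _i' : Fin r, 2 * (C * Real.sqrt d * (2^r * lr)) :=
              Finset.sum_le_sum (fun i' _ => hAbar i' i)
          _ = (r:ℝ) * (2 * (C * Real.sqrt d * (2^r * lr))) := by
              rw [Finset.sum_const, Finset.card_univ, Fintype.card_fin, nsmul_eq_mul]
          _ = 2 * (C * Real.sqrt d * (2^r * lr)) * r := by ring
      calc ∑ i, |c - A i| ≤ ∑ _i : Fin r, 2 * (C * Real.sqrt d * (2^r * lr)) :=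
            Finset.sum_le_sum (fun i _ => hci i)
        _ = (r:ℝ) * (2 * (C * Real.sqrt d * (2^r * lr))) := by
            rw [Finset.sum_const, Finset.card_univ, Fintype.card_fin, nsmul_eq_mul]
    have hE : c + ∑ t : Fin r → Bool, (n t:ℝ) * Real.log (1 + Real.exp (-W t))
        ≤ Real.log 2 * ((Hent r + ε) * d) := by
      have h2 : c + (∑ t : Fin r → Bool, (n t:ℝ) * Real.log (1 + Real.exp (-(w0 r t))))
          = ∑ t ∈ TTF r, (n t:ℝ) * (Real.log 2 * binEnt ((wt t:ℝ)/r)) := by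
        rw [hmain]
        exact Finset.sum_congr rfl (fun t ht => by rw [hbr t ht])
      have hexp1 : Real.log 2 * ((d:ℝ) * Hent r + C * Real.sqrt d * (2^r * M))
          = Real.log 2 * ((d:ℝ) * Hent r) + Real.log 2 * (C * Real.sqrt d * (2^r * M)) := by
        ring
      have hexp2 : Real.log 2 * ((Hent r + ε) * d)
          = Real.log 2 * ((d:ℝ) * Hent r) + Real.log 2 * ε * d := by ring
      have hKid : Real.log 2 * (C * Real.sqrt d * (2^r * M))
          + (r:ℝ) * (2 * (C * Real.sqrt d * (2^r * lr))) = K * Real.sqrt d := by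
        rw [hKdef]; ring
      linarith [hstep1, h2, hstep4, hP, hKd, hexp1, hexp2, hKid]
    -- put everything together
    have hfin : (((Finset.univ.filter
          (fun x : Fin d → Bool => (∑ j, aa j * bv x j) ≤ c)).card : ℕ) : ℝ)
        ≤ (2:ℝ) ^ ((Hent r + ε) * (d:ℝ)) := by
      calc (((Finset.univ.filter
            (fun x : Fin d → Bool => (∑ j, aa j * bv x j) ≤ c)).card : ℕ) : ℝ)
          ≤ Real.exp c * ∏ j, (1 + Real.exp (-aa j)) := count_le d aa c
        _ = Real.exp (c + ∑ t : Fin r → Bool, (n t:ℝ) * Real.log (1 + Real.exp (-W t))) := by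
            rw [hprod, ← Real.exp_add]
        _ ≤ Real.exp (Real.log 2 * ((Hent r + ε) * (d:ℝ))) := Real.exp_le_exp.2 hE
        _ = (2:ℝ) ^ ((Hent r + ε) * (d:ℝ)) := (Real.rpow_def_of_pos (by norm_num) _).symm
    rw [hset]
    exact hfin
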